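/- Let C and D be Z-type complexes over 𝔽₂, let V be a common separated logical operator subcomplex of C (determined by u) and of D (determined by v), and let Q be the Z̄-merged complex with quotient map coeq₀ : C₀ ⊕ D₀ → Q₀. Then coeq₀ maps ker(∂₋₁^C ⊕ ∂₋₁^D) into ker ∂₋₁^Q and im(∂₀^C ⊕ ∂₀^D) into im ∂₀^Q, so it induces a linear map H₀(C) ⊕ H₀(D) → H₀(Q); this induced map is surjective, and its kernel is the one-dimensional subspace spanned by ([u],[v]). -/

import Mathlib

/-!
STATEMENT 7: For a separated Z̄-merge of Z-type complexes C and D along a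
common logical operator subcomplex V, the quotient map coeq₀ maps cycles to
cycles and boundaries to boundaries, hence induces a linear map
H₀(C) ⊕ H₀(D) → H₀(Q); this induced map is surjective and its kernel is the
one-dimensional subspace spanned by ([u],[v]).
-/

abbrev F2 := ZMod 2

/-- Coordinate inclusion of 𝔽₂^α into 𝔽₂^β along an embedding ι : α ↪ β. -/
noncomputable def incl {α β : Type} [Fintype α] [DecidableEq β] (ι : α ↪ β) :
    (α → F2) →ₗ[F2] (β → F2) :=
  Matrix.mulVecLin (Matrix.of fun j i => if j = ι i then 1 else 0)


lemma incl_apply_ne {α β : Type} [Fintype α] [DecidableEq β] (ι : α ↪ β) (s : α → F2) (j : β)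
    (h : ∀ i, j ≠ ι i) : incl ι s j = 0 := by
  simp only [incl, Matrix.mulVecLin_apply, Matrix.mulVec, dotProduct, Matrix.of_apply]
  exact Finset.sum_eq_zero fun i _ => by simp [if_neg (h i)]

lemma incl_apply_eq {α β : Type} [Fintype α] [DecidableEq β] (ι : α ↪ β) (s : α → F2) (i : α) :
    incl ι s (ι i) = s i := by
  simp only [incl, Matrix.mulVecLin_apply, Matrix.mulVec, dotProduct, Matrix.of_apply]
  rw [Finset.sum_eq_single i]
  · rw [if_pos rfl, one_mul]
  · intro b _ hb; rw [if_neg (fun h => hb (ι.injective h.symm)), zero_mul]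
  · intro h; exact absurd (Finset.mem_univ i) h

lemma F2fun_neg {γ : Type} (w : γ → F2) : -w = w := funext fun _ => CharTwo.neg_eq _
lemma F2fun_add_self {γ : Type} (w : γ → F2) : w + w = 0 :=
  funext fun _ => CharTwo.add_self_eq_zero _

set_option maxHeartbeats 3000000 in
theorem separated_Zbar_merge_homology_map
    {SC1 SC0 SCm SD1 SD0 SDm T0 : Type}
    [Fintype SC1] [Fintype SC0] [Fintype SCm]
    [Fintype SD1] [Fintype SD0] [Fintype SDm] [Fintype T0]
    [DecidableEq SC0] [DecidableEq SD0] [DecidableEq SCm] [DecidableEq SDm] [DecidableEq T0]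
    (dC0 : (SC1 → F2) →ₗ[F2] (SC0 → F2)) (dCm : (SC0 → F2) →ₗ[F2] (SCm → F2))
    (dD0 : (SD1 → F2) →ₗ[F2] (SD0 → F2)) (dDm : (SD0 → F2) →ₗ[F2] (SDm → F2))
    (hC : dCm ∘ₗ dC0 = 0) (hD : dDm ∘ₗ dD0 = 0)
    (ιC : T0 ↪ SC0) (ιD : T0 ↪ SD0)
    (hu : incl ιC 1 ∈ LinearMap.ker dCm) (hu' : incl ιC 1 ∉ LinearMap.range dC0)
    (hv : incl ιD 1 ∈ LinearMap.ker dDm) (hv' : incl ιD 1 ∉ LinearMap.range dD0)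
    (hcommon : ∀ s : T0 → F2, dCm (incl ιC s) = 0 ↔ dDm (incl ιD s) = 0)
    (hsepC : ∀ u' : SC0 → F2, u' ∈ LinearMap.ker dCm → u' ∉ LinearMap.range dC0 →
      (∀ j, u' j ≠ 0 → incl ιC 1 j ≠ 0) → u' + incl ιC 1 ∈ LinearMap.range dC0)
    (hsepD : ∀ v' : SD0 → F2, v' ∈ LinearMap.ker dDm → v' ∉ LinearMap.range dD0 →
      (∀ j, v' j ≠ 0 → incl ιD 1 j ≠ 0) → v' + incl ιD 1 ∈ LinearMap.range dD0)
    (hsep3 : ∀ s : T0 → F2,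
      (incl ιC s ∈ LinearMap.ker dCm ∧ incl ιC s ∉ LinearMap.range dC0) ↔
      (incl ιD s ∈ LinearMap.ker dDm ∧ incl ιD s ∉ LinearMap.range dD0))
    (dQm : (((SC0 → F2) × (SD0 → F2)) ⧸
        LinearMap.range ((incl ιC).prod (incl ιD))) →ₗ[F2]
      (((SCm → F2) × (SDm → F2)) ⧸
        LinearMap.range ((dCm ∘ₗ incl ιC).prod (dDm ∘ₗ incl ιD))))
    (hdQm : dQm ∘ₗ (LinearMap.range ((incl ιC).prod (incl ιD))).mkQ =
      (LinearMap.range ((dCm ∘ₗ incl ιC).prod (dDm ∘ₗ incl ιD))).mkQ ∘ₗ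
        (dCm.prodMap dDm)) :
    -- coeq₀ maps cycles of C ⊕ D to cycles of Q
    (∀ x ∈ LinearMap.ker (dCm.prodMap dDm),
      (LinearMap.range ((incl ιC).prod (incl ιD))).mkQ x ∈ LinearMap.ker dQm) ∧
    -- coeq₀ maps boundaries of C ⊕ D to boundaries of Q
    (∀ x ∈ LinearMap.range (dC0.prodMap dD0),
      (LinearMap.range ((incl ιC).prod (incl ιD))).mkQ x ∈
        LinearMap.range
          ((LinearMap.range ((incl ιC).prod (incl ιD))).mkQ ∘ₗ (dC0.prodMap dD0))) ∧
    -- hence coeq₀ induces a map H₀(C) ⊕ H₀(D) → H₀(Q), which is surjective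
    -- with kernel spanned by ([u],[v])
    (∀ φ : ((LinearMap.ker dCm ⧸
          ((LinearMap.range dC0).comap (LinearMap.ker dCm).subtype :
            Submodule F2 (LinearMap.ker dCm))) ×
        (LinearMap.ker dDm ⧸
          ((LinearMap.range dD0).comap (LinearMap.ker dDm).subtype :
            Submodule F2 (LinearMap.ker dDm)))) →ₗ[F2]
        (LinearMap.ker dQm ⧸
          ((LinearMap.range
              ((LinearMap.range ((incl ιC).prod (incl ιD))).mkQ ∘ₗ (dC0.prodMap dD0))).comap
            (LinearMap.ker dQm).subtype :
            Submodule F2 (LinearMap.ker dQm))),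
      (∀ (a : LinearMap.ker dCm) (b : LinearMap.ker dDm) (x : LinearMap.ker dQm),
        (x : ((SC0 → F2) × (SD0 → F2)) ⧸ LinearMap.range ((incl ιC).prod (incl ιD))) =
          (LinearMap.range ((incl ιC).prod (incl ιD))).mkQ ((a : SC0 → F2), (b : SD0 → F2)) →
        φ (Submodule.Quotient.mk a, Submodule.Quotient.mk b) = Submodule.Quotient.mk x) →
      Function.Surjective φ ∧
      LinearMap.ker φ =
        Submodule.span F2
          {(Submodule.Quotient.mk ⟨incl ιC 1, hu⟩, Submodule.Quotient.mk ⟨incl ιD 1, hv⟩)} ∧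
      Module.finrank F2 (LinearMap.ker φ) = 1) := by
  classical
  have hsupp : ∀ s : T0 → F2, ∀ j, incl ιC s j ≠ 0 → incl ιC 1 j ≠ 0 := by
    intro s j hj
    by_cases hjr : ∀ i, j ≠ ιC i
    · exact absurd (incl_apply_ne ιC s j hjr) hj
    · push_neg at hjr
      obtain ⟨i, rfl⟩ := hjr
      rw [incl_apply_eq]
      exact one_ne_zero
  have hsuppD : ∀ s : T0 → F2, ∀ j, incl ιD s j ≠ 0 → incl ιD 1 j ≠ 0 := by
    intro s j hj
    by_cases hjr : ∀ i, j ≠ ιD i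
    · exact absurd (incl_apply_ne ιD s j hjr) hj
    · push_neg at hjr
      obtain ⟨i, rfl⟩ := hjr
      rw [incl_apply_eq]
      exact one_ne_zero
  have hcycle : ∀ a : SC0 → F2, ∀ b : SD0 → F2, dCm a = 0 → dDm b = 0 →
      dQm ((LinearMap.range ((incl ιC).prod (incl ιD))).mkQ (a, b)) = 0 := by
    intro a b ha hb
    have h := LinearMap.congr_fun hdQm (a, b)
    simp only [LinearMap.comp_apply, LinearMap.prodMap_apply] at h
    rw [h, ha, hb]
    simp [Prod.map]
    exact ⟨0, by simp, by simp⟩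
  refine ⟨?_, ?_, ?_⟩
  · intro x hx
    rw [LinearMap.mem_ker] at hx ⊢
    have h := LinearMap.congr_fun hdQm x
    simp only [LinearMap.comp_apply] at h
    rw [h, hx, map_zero]
  · rintro x ⟨y, rfl⟩
    exact ⟨y, rfl⟩
  · intro φ hφ
    have hgen0 : φ (Submodule.Quotient.mk ⟨incl ιC 1, hu⟩,
        Submodule.Quotient.mk ⟨incl ιD 1, hv⟩) = 0 := by
      have hx0 : ((0 : LinearMap.ker dQm) :
          ((SC0 → F2) × (SD0 → F2)) ⧸ LinearMap.range ((incl ιC).prod (incl ιD))) =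
          (LinearMap.range ((incl ιC).prod (incl ιD))).mkQ (incl ιC 1, incl ιD 1) := by
        rw [ZeroMemClass.coe_zero, Submodule.mkQ_apply]
        symm
        rw [Submodule.Quotient.mk_eq_zero]
        exact ⟨1, rfl⟩
      have h := hφ ⟨incl ιC 1, hu⟩ ⟨incl ιD 1, hv⟩ 0 hx0
      rw [h, Submodule.Quotient.mk_zero]
    constructor
    · -- surjectivity
      intro q
      obtain ⟨x, rfl⟩ := Submodule.Quotient.mk_surjective _ q
      obtain ⟨cd, hcd⟩ := Submodule.Quotient.mk_surjective (LinearMap.range ((incl ιC).prod (incl ιD)))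
        (x : ((SC0 → F2) × (SD0 → F2)) ⧸ (LinearMap.range ((incl ιC).prod (incl ιD))))
      have hx : dQm ((LinearMap.range ((incl ιC).prod (incl ιD))).mkQ cd) = 0 := by
        rw [Submodule.mkQ_apply, hcd]
        exact x.2
      have h := LinearMap.congr_fun hdQm cd
      simp only [LinearMap.comp_apply, LinearMap.prodMap_apply] at h
      rw [h] at hx
      rw [Submodule.mkQ_apply, Submodule.Quotient.mk_eq_zero] at hx
      obtain ⟨s, hs⟩ := hx
      simp only [LinearMap.prod_apply, Pi.prod, LinearMap.comp_apply] at hs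
      have hs1 : dCm (incl ιC s) = dCm cd.1 := congrArg Prod.fst hs
      have hs2 : dDm (incl ιD s) = dDm cd.2 := congrArg Prod.snd hs
      have ha : dCm (cd.1 + incl ιC s) = 0 := by
        rw [map_add, ← hs1, F2fun_add_self]
      have hb : dDm (cd.2 + incl ιD s) = 0 := by
        rw [map_add, ← hs2, F2fun_add_self]
      have hmk : (LinearMap.range ((incl ιC).prod (incl ιD))).mkQ (cd.1 + incl ιC s, cd.2 + incl ιD s) = (LinearMap.range ((incl ιC).prod (incl ιD))).mkQ cd := by
        rw [Submodule.mkQ_apply, Submodule.mkQ_apply, Submodule.Quotient.eq]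
        refine ⟨s, ?_⟩
        simp only [LinearMap.prod_apply, Pi.prod]
        ext <;> simp
      refine ⟨(Submodule.Quotient.mk ⟨cd.1 + incl ιC s, ha⟩,
        Submodule.Quotient.mk ⟨cd.2 + incl ιD s, hb⟩), ?_⟩
      exact hφ ⟨cd.1 + incl ιC s, ha⟩ ⟨cd.2 + incl ιD s, hb⟩ x (by rw [← hcd]; exact hmk.symm)
    have hker : LinearMap.ker φ = Submodule.span F2
        {(Submodule.Quotient.mk ⟨incl ιC 1, hu⟩, Submodule.Quotient.mk ⟨incl ιD 1, hv⟩)} := by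
      apply le_antisymm
      · -- ker ≤ span
        rintro z hz
        rw [LinearMap.mem_ker] at hz
        obtain ⟨a, ha⟩ := Submodule.Quotient.mk_surjective _ z.1
        obtain ⟨b, hb⟩ := Submodule.Quotient.mk_surjective _ z.2
        have hzab : z = (Submodule.Quotient.mk a, Submodule.Quotient.mk b) := by
          rw [ha, hb]
        have haz : dCm (a : SC0 → F2) = 0 := a.2
        have hbz : dDm (b : SD0 → F2) = 0 := b.2
        have hxmem : (LinearMap.range ((incl ιC).prod (incl ιD))).mkQ ((a : SC0 → F2), (b : SD0 → F2)) ∈ LinearMap.ker dQm :=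
          hcycle _ _ haz hbz
        have h := hφ a b ⟨_, hxmem⟩ rfl
        rw [← hzab, hz] at h
        have h0 : (⟨_, hxmem⟩ : LinearMap.ker dQm) ∈
            ((LinearMap.range ((LinearMap.range ((incl ιC).prod (incl ιD))).mkQ ∘ₗ (dC0.prodMap dD0))).comap
              (LinearMap.ker dQm).subtype) := by
          rw [← Submodule.Quotient.mk_eq_zero]
          exact h.symm
        rw [Submodule.mem_comap] at h0
        obtain ⟨y, hy⟩ := h0
        simp only [LinearMap.comp_apply, LinearMap.prodMap_apply, Submodule.subtype_apply] at hy
        rw [Submodule.mkQ_apply, Submodule.mkQ_apply, Submodule.Quotient.eq] at hy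
        obtain ⟨s, hs⟩ := hy
        simp only [LinearMap.prod_apply, Pi.prod, Prod.map] at hs
        have hs1 : incl ιC s = dC0 y.1 - (a : SC0 → F2) := congrArg Prod.fst hs
        have hs2 : incl ιD s = dD0 y.2 - (b : SD0 → F2) := congrArg Prod.snd hs
        have haeq : (a : SC0 → F2) = dC0 y.1 + incl ιC s := by
          rw [hs1, add_sub, F2fun_add_self, zero_sub, F2fun_neg]
        have hbeq : (b : SD0 → F2) = dD0 y.2 + incl ιD s := by
          rw [hs2, add_sub, F2fun_add_self, zero_sub, F2fun_neg]
        have hCy : dCm (dC0 y.1) = 0 := LinearMap.congr_fun hC y.1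
        have hkers : dCm (incl ιC s) = 0 := by
          rw [hs1, map_sub, haz, hCy, sub_zero]
        by_cases hcase : incl ιC s ∈ LinearMap.range dC0
        · -- both classes are zero
          have haR : (a : SC0 → F2) ∈ LinearMap.range dC0 := by
            rw [haeq]
            exact add_mem ⟨y.1, rfl⟩ hcase
          have hkersD : dDm (incl ιD s) = 0 := (hcommon s).mp hkers
          have hbR : incl ιD s ∈ LinearMap.range dD0 := by
            by_contra hcon
            exact ((hsep3 s).mpr ⟨hkersD, hcon⟩).2 hcase
          have hbR' : (b : SD0 → F2) ∈ LinearMap.range dD0 := by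
            rw [hbeq]
            exact add_mem ⟨y.2, rfl⟩ hbR
          have hz0 : z = 0 := by
            rw [hzab]
            have h1 : (Submodule.Quotient.mk a : LinearMap.ker dCm ⧸ ((LinearMap.range dC0).comap (LinearMap.ker dCm).subtype)) = 0 := by
              rw [Submodule.Quotient.mk_eq_zero]
              exact Submodule.mem_comap.mpr haR
            have h2 : (Submodule.Quotient.mk b : LinearMap.ker dDm ⧸ ((LinearMap.range dD0).comap (LinearMap.ker dDm).subtype)) = 0 := by
              rw [Submodule.Quotient.mk_eq_zero]
              exact Submodule.mem_comap.mpr hbR'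
            rw [h1, h2]
            rfl
          rw [hz0]
          exact Submodule.zero_mem _
        · -- z equals the generator
          have hCC := hsepC (incl ιC s) hkers hcase (hsupp s)
          have hD' := (hsep3 s).mp ⟨hkers, hcase⟩
          have hDD := hsepD (incl ιD s) hD'.1 hD'.2 (hsuppD s)
          have h1 : (Submodule.Quotient.mk a : LinearMap.ker dCm ⧸ ((LinearMap.range dC0).comap (LinearMap.ker dCm).subtype)) =
              Submodule.Quotient.mk ⟨incl ιC 1, hu⟩ := by
            rw [Submodule.Quotient.eq]
            refine Submodule.mem_comap.mpr ?_
            show ((a - ⟨incl ιC 1, hu⟩ : LinearMap.ker dCm) : SC0 → F2) ∈ _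
            rw [AddSubgroupClass.coe_sub]
            have : (a : SC0 → F2) - incl ιC 1 = dC0 y.1 + (incl ιC s + incl ιC 1) := by
              rw [haeq, sub_eq_add_neg, F2fun_neg]
              abel
            rw [this]
            exact add_mem ⟨y.1, rfl⟩ hCC
          have h2 : (Submodule.Quotient.mk b : LinearMap.ker dDm ⧸ ((LinearMap.range dD0).comap (LinearMap.ker dDm).subtype)) =
              Submodule.Quotient.mk ⟨incl ιD 1, hv⟩ := by
            rw [Submodule.Quotient.eq]
            refine Submodule.mem_comap.mpr ?_
            show ((b - ⟨incl ιD 1, hv⟩ : LinearMap.ker dDm) : SD0 → F2) ∈ _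
            rw [AddSubgroupClass.coe_sub]
            have : (b : SD0 → F2) - incl ιD 1 = dD0 y.2 + (incl ιD s + incl ιD 1) := by
              rw [hbeq, sub_eq_add_neg, F2fun_neg]
              abel
            rw [this]
            exact add_mem ⟨y.2, rfl⟩ hDD
          rw [hzab, h1, h2]
          exact Submodule.mem_span_singleton_self _
      · -- span ≤ ker
        exact (Submodule.span_singleton_le_iff_mem _ _).mpr (LinearMap.mem_ker.mpr hgen0)
    refine ⟨hker, ?_⟩
    rw [hker]
    apply finrank_span_singleton
    intro hcon
    have h1 : (Submodule.Quotient.mk (⟨incl ιC 1, hu⟩ : LinearMap.ker dCm) :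
        LinearMap.ker dCm ⧸ _) = 0 := congrArg Prod.fst hcon
    rw [Submodule.Quotient.mk_eq_zero, Submodule.mem_comap] at h1
    exact hu' h1
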